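/- Let F = F_{[a₁,b₁]} ⋯ F_{[a_m,b_m]} be a star network of order n with internal vertices x₁,…,x_m, and let π be a covering path family of F. Then the triple (π_i, π_j, k) is a defect of π if and only if i < j and π_j ≺_k π_i (i.e., π_j enters x_k on a strictly lower edge than π_i). -/

import Mathlib

/-!  Star networks, covering path families, crossings and defects,
     following Parisi–Skandera–Spahiu–Wang.

A star network of order `n` is a (possibly condensed) concatenation
`F_{[a₁,b₁]} ⋯ F_{[a_m,b_m]}` of simple star networks.  We model it by the
sequence of intervals (`lo k`, `hi k`, levels `0,…,n-1` from bottom to top,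
star `k` acting between stage `k` and stage `k+1`) together with a boolean
function recording, for each pair of internal vertices, whether the parallel
edges between them have been condensed into one multi-edge.  -/
structure StarNetwork (n : ℕ) where
  m : ℕ
  lo : Fin m → Fin n
  hi : Fin m → Fin n
  lo_le_hi : ∀ k, lo k ≤ hi k
  cond : Fin m → Fin m → Bool

namespace StarNetwork

variable {n : ℕ} (F : StarNetwork n)

/-- Level `c` belongs to the interval of the `k`-th star (stars are indexed
from `0`; for `k ≥ m` this is false). -/
def memI (k : ℕ) (c : Fin n) : Prop :=
  ∃ h : k < F.m, F.lo ⟨k, h⟩ ≤ c ∧ c ≤ F.hi ⟨k, h⟩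

/-- The set `I_{j,l}` of levels passing directly from internal vertex `x_j` to
internal vertex `x_l`; its cardinality is the number `μ(x_j,x_l)` of parallel
edges between `x_j` and `x_l` in the plain concatenation. -/
def Iset (j l : Fin F.m) : Finset (Fin n) :=
  ((Finset.Icc (F.lo j) (F.hi j)) ∩ (Finset.Icc (F.lo l) (F.hi l))) \
    ((Finset.Ioo j l).biUnion fun p => Finset.Icc (F.lo p) (F.hi p))

/-- A (raw) covering path family of the star network `F`: path `i` starts at
source `i` (level `i` at stage `0`) and `traj i k` is the level of path `i`
after passing the first `k` stars.  A path not entering a star keeps its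
level; the paths entering a star exit it on the levels of its interval;
distinct paths occupy distinct levels at every stage.  These conditions say
exactly that every edge of `F` lies on as many paths as its multiplicity. -/
structure Raw where
  traj : Fin n → ℕ → Fin n
  init : ∀ i, traj i 0 = i
  inj : ∀ k, Function.Injective fun i => traj i k
  step_out : ∀ i k, ¬ F.memI k (traj i k) → traj i (k + 1) = traj i k
  step_in : ∀ i k, F.memI k (traj i k) → F.memI k (traj i (k + 1))

namespace Raw

variable {F} (π : F.Raw)

/-- The type of the path family: path `i` terminates at sink `ptype π i`. -/
noncomputable def ptype : Equiv.Perm (Fin n) :=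
  Equiv.ofBijective (fun i => π.traj i F.m)
    (Finite.injective_iff_bijective.mp (π.inj F.m))

/-- Path `i` passes through (enters) the internal vertex `x_k`. -/
def enters (i : Fin n) (k : Fin F.m) : Prop :=
  F.lo k ≤ π.traj i k.val ∧ π.traj i k.val ≤ F.hi k

/-- Paths `i` and `j` enter `x_k` on the same (necessarily condensed) edge. -/
def sameEnter (i j : Fin n) (k : Fin F.m) : Prop :=
  π.enters i k ∧ π.enters j k ∧
    ∃ p : Fin F.m, p < k ∧ F.cond p k = true ∧
      π.traj i k.val ∈ F.Iset p k ∧ π.traj j k.val ∈ F.Iset p k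

/-- Paths `π_i` and `π_j` meet at `x_k`: `x_k` is the initial vertex of a
connected component of their intersection. -/
def meet (i j : Fin n) (k : Fin F.m) : Prop :=
  i ≠ j ∧ π.enters i k ∧ π.enters j k ∧ ¬ π.sameEnter i j k

/-- `π_i ≺_k π_j` : both paths enter `x_k` and `π_i` enters on a strictly
lower edge than `π_j`. -/
def precAt (i j : Fin n) (k : Fin F.m) : Prop :=
  π.enters i k ∧ π.enters j k ∧ ¬ π.sameEnter i j k ∧
    π.traj i k.val < π.traj j k.val

/-- `π_i ∼_k π_j` : both paths enter `x_k` on the same edge. -/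
def simAt (i j : Fin n) (k : Fin F.m) : Prop :=
  π.enters i k ∧ π.enters j k ∧ (i = j ∨ π.sameEnter i j k)

/-- `π_i ≾_k π_j`. -/
def precsimAt (i j : Fin n) (k : Fin F.m) : Prop :=
  π.precAt i j k ∨ π.simAt i j k

/-- Paths `i` and `j` travel together from `x_k` directly to `x_l` on a
common (condensed) edge. -/
def linked (i j : Fin n) (k l : Fin F.m) : Prop :=
  k < l ∧ F.cond k l = true ∧
    π.traj i (k.val + 1) ∈ F.Iset k l ∧ π.traj j (k.val + 1) ∈ F.Iset k l

/-- `(x_k, …, x_l)` is a crossing of `π_i` and `π_j`: it is a connected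
component of their intersection (it starts at a meeting vertex `x_k`, the two
paths stay together on condensed edges until `x_l`, and separate after `x_l`)
and the two paths enter `x_k` and exit `x_l` in different vertical orders. -/
def crossPair (i j : Fin n) (k l : Fin F.m) : Prop :=
  π.meet i j k ∧ Relation.ReflTransGen (π.linked i j) k l ∧
    (∀ l', ¬ π.linked i j l l') ∧
    ¬ ((π.traj i k.val < π.traj j k.val) ↔
        (π.traj i (l.val + 1) < π.traj j (l.val + 1)))

/-- The number of crossings of `π_i` and `π_j` occurring strictly before the
internal vertex `x_k`. -/
noncomputable def crossBefore (i j : Fin n) (k : Fin F.m) : ℕ :=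
  Set.ncard {pl : Fin F.m × Fin F.m | π.crossPair i j pl.1 pl.2 ∧ pl.2 < k}

/-- `(π_i, π_j, k)` is a defect of `π`: `i < j` and `π_i`, `π_j` meet at `x_k`
after having crossed an odd number of times. -/
def defect (i j : Fin n) (k : Fin F.m) : Prop :=
  i < j ∧ π.meet i j k ∧ Odd (π.crossBefore i j k)

/-- The number of defects of `π`. -/
noncomputable def dfct : ℕ :=
  Set.ncard {t : Fin n × Fin n × Fin F.m | π.defect t.1 t.2.1 t.2.2}

end Raw

/-- Two raw families represent the same path family of `F` iff they differ
only in the distribution of paths among the strands of condensed edges. -/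
def condRel (π σ : F.Raw) : Prop :=
  ∀ i k, π.traj i k = σ.traj i k ∨
    ∃ j l : Fin F.m, j.val ≤ k ∧ k < l.val ∧ F.cond j l = true ∧
      π.traj i k ∈ F.Iset j l ∧ σ.traj i k ∈ F.Iset j l

/-- `Π(F)`: the set (type) of covering path families of the star network `F`. -/
def PathFamily := Quot F.condRel

/-- The type of a path family. -/
noncomputable def PathFamily.typeQ (σ : F.PathFamily) : Equiv.Perm (Fin n) :=
  (Quot.out σ).ptype

/-- The number of defects of a path family. -/
noncomputable def PathFamily.dfctQ (σ : F.PathFamily) : ℕ :=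
  (Quot.out σ).dfct

end StarNetwork
namespace StarNetwork

section Aux

variable {n : ℕ} {F : StarNetwork n}

lemma mem_Iset_iff {v : Fin n} {p l : Fin F.m} :
    v ∈ F.Iset p l ↔ ((F.lo p ≤ v ∧ v ≤ F.hi p) ∧ (F.lo l ≤ v ∧ v ≤ F.hi l)) ∧
      ∀ q : Fin F.m, p < q → q < l → ¬ (F.lo q ≤ v ∧ v ≤ F.hi q) := by
  simp only [StarNetwork.Iset, Finset.mem_sdiff, Finset.mem_inter, Finset.mem_Icc,
    Finset.mem_biUnion, Finset.mem_Ioo, not_exists, not_and]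
  constructor
  · rintro ⟨h1, h2⟩
    exact ⟨h1, fun q hq hq' hl hh => h2 q ⟨hq, hq'⟩ hl hh⟩
  · rintro ⟨h1, h2⟩
    exact ⟨h1, fun q hq hl hh => h2 q hq.1 hq.2 hl hh⟩

lemma memI_iff {c : Fin n} {k : Fin F.m} :
    F.memI k.val c ↔ F.lo k ≤ c ∧ c ≤ F.hi k := by
  constructor
  · rintro ⟨h, h1, h2⟩
    simpa using And.intro h1 h2
  · intro h
    exact ⟨k.isLt, by simpa using h.1, by simpa using h.2⟩

namespace Raw

variable (π : F.Raw) (i j : Fin n)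

lemma enters_def (k : Fin F.m) :
    π.enters i k ↔ F.lo k ≤ π.traj i k.val ∧ π.traj i k.val ≤ F.hi k := Iff.rfl

lemma meet_def (k : Fin F.m) :
    π.meet i j k ↔ i ≠ j ∧ π.enters i k ∧ π.enters j k ∧ ¬ π.sameEnter i j k := Iff.rfl

lemma precAt_def (k : Fin F.m) :
    π.precAt i j k ↔ π.enters i k ∧ π.enters j k ∧ ¬ π.sameEnter i j k ∧
      π.traj i k.val < π.traj j k.val := Iff.rfl

lemma defect_def (k : Fin F.m) :
    π.defect i j k ↔ i < j ∧ π.meet i j k ∧ Odd (π.crossBefore i j k) := Iff.rfl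

lemma crossPair_def (k l : Fin F.m) :
    π.crossPair i j k l ↔ π.meet i j k ∧ Relation.ReflTransGen (π.linked i j) k l ∧
      (∀ l', ¬ π.linked i j l l') ∧
      ¬ ((π.traj i k.val < π.traj j k.val) ↔
          (π.traj i (l.val + 1) < π.traj j (l.val + 1))) := Iff.rfl

lemma sameEnter_symm {k : Fin F.m} (h : π.sameEnter i j k) : π.sameEnter j i k := by
  obtain ⟨h1, h2, p, hp, hc, hi', hj'⟩ := h
  exact ⟨h2, h1, p, hp, hc, hj', hi'⟩

lemma traj_ne (hij : i ≠ j) (t : ℕ) : π.traj i t ≠ π.traj j t :=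
  fun h => hij (π.inj t h)

lemma traj_const_fwd {p l : Fin F.m}
    (hv : π.traj i (p.val + 1) ∈ F.Iset p l) :
    ∀ t, p.val + 1 ≤ t → t ≤ l.val → π.traj i t = π.traj i (p.val + 1) := by
  intro t
  induction t with
  | zero => omega
  | succ s ih =>
    intro ht ht'
    rcases Nat.lt_or_ge s (p.val + 1) with h | h
    · have : s + 1 = p.val + 1 := by omega
      rw [this]
    · have hs : π.traj i s = π.traj i (p.val + 1) := ih h (by omega)
      have hsm : s < F.m := by have := l.is_lt; omega
      have hnot : ¬ F.memI s (π.traj i s) := by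
        rw [hs]
        rintro ⟨hm, hA, hB⟩
        exact (mem_Iset_iff.mp hv).2 ⟨s, hm⟩ (by simp [Fin.lt_def]; omega)
          (by simp [Fin.lt_def]; omega) ⟨hA, hB⟩
      exact (π.step_out i s hnot).trans hs

lemma traj_const_bwd {p k : Fin F.m} (hpk : p < k)
    (hv : π.traj i k.val ∈ F.Iset p k) :
    ∀ t, p.val + 1 ≤ t → t ≤ k.val → π.traj i t = π.traj i k.val := by
  suffices h : ∀ d t, t + d = k.val → p.val + 1 ≤ t → π.traj i t = π.traj i k.val by
    intro t ht ht'
    exact h (k.val - t) t (by omega) ht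
  intro d
  induction d with
  | zero => intro t ht _; rw [show t = k.val by omega]
  | succ d ih =>
    intro t ht hpt
    have h1 : π.traj i (t + 1) = π.traj i k.val := ih (t + 1) (by omega) (by omega)
    have hq : ¬ F.memI t (π.traj i t) := by
      intro hm
      have h2 := π.step_in i t hm
      rw [h1] at h2
      obtain ⟨hh, hA, hB⟩ := h2
      exact (mem_Iset_iff.mp hv).2 ⟨t, hh⟩ (by simp [Fin.lt_def]; omega)
        (by simp [Fin.lt_def]; omega) ⟨hA, hB⟩
    exact (π.step_out i t hq).symm.trans h1

lemma enters_of_Iset {p l : Fin F.m}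
    (hv : π.traj i (p.val + 1) ∈ F.Iset p l) : π.enters i p := by
  have hint := (mem_Iset_iff.mp hv).1.1
  by_cases hm : F.memI p.val (π.traj i p.val)
  · exact memI_iff.mp hm
  · rw [enters_def, ← π.step_out i p.val hm]
    exact hint

lemma linked_traj_i {p l : Fin F.m} (h : π.linked i j p l) :
    π.traj i l.val = π.traj i (p.val + 1) :=
  π.traj_const_fwd i h.2.2.1 l.val (by have := Fin.lt_def.mp h.1; omega) le_rfl

lemma linked_traj_j {p l : Fin F.m} (h : π.linked i j p l) :
    π.traj j l.val = π.traj j (p.val + 1) :=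
  π.traj_const_fwd j h.2.2.2 l.val (by have := Fin.lt_def.mp h.1; omega) le_rfl

lemma linked_sameEnter {p l : Fin F.m} (h : π.linked i j p l) : π.sameEnter i j l := by
  have hti : π.traj i l.val ∈ F.Iset p l := by
    rw [π.linked_traj_i i j h]; exact h.2.2.1
  have htj : π.traj j l.val ∈ F.Iset p l := by
    rw [π.linked_traj_j i j h]; exact h.2.2.2
  exact ⟨(mem_Iset_iff.mp hti).1.2, (mem_Iset_iff.mp htj).1.2,
    p, h.1, h.2.1, hti, htj⟩

lemma sameEnter_linked {k : Fin F.m} (h : π.sameEnter i j k) :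
    ∃ p, p < k ∧ π.linked i j p k := by
  obtain ⟨h1, h2, p, hpk, hc, hiI, hjI⟩ := h
  refine ⟨p, hpk, hpk, hc, ?_, ?_⟩
  · rw [π.traj_const_bwd i hpk hiI (p.val + 1) le_rfl (by have := Fin.lt_def.mp hpk; omega)]
    exact hiI
  · rw [π.traj_const_bwd j hpk hjI (p.val + 1) le_rfl (by have := Fin.lt_def.mp hpk; omega)]
    exact hjI

lemma linked_succ_unique {p l l' : Fin F.m}
    (h : π.linked i j p l) (h' : π.linked i j p l') : l = l' := by
  rcases lt_trichotomy l l' with hlt | heq | hlt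
  · exfalso
    exact (mem_Iset_iff.mp h'.2.2.1).2 l h.1 hlt ((mem_Iset_iff.mp h.2.2.1).1.2)
  · exact heq
  · exfalso
    exact (mem_Iset_iff.mp h.2.2.1).2 l' h'.1 hlt ((mem_Iset_iff.mp h'.2.2.1).1.2)

end Raw

end Aux

end StarNetwork
namespace StarNetwork

namespace Raw

variable {n : ℕ} {F : StarNetwork n} (π : F.Raw) (i j : Fin n)

/-- Stage `t` lies strictly inside a condensed edge shared by paths `i`,`j`. -/
def covered (t : ℕ) : Prop :=
  ∃ p l : Fin F.m, π.linked i j p l ∧ p.val < t ∧ t ≤ l.val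

/-- Number of crossings of paths `i`,`j` completed before stage `t`. -/
noncomputable def crossCount (t : ℕ) : ℕ :=
  Set.ncard {pl : Fin F.m × Fin F.m | π.crossPair i j pl.1 pl.2 ∧ pl.2.val < t}

lemma crossBefore_eq (k : Fin F.m) :
    π.crossBefore i j k = π.crossCount i j k.val := by
  unfold crossBefore crossCount
  congr 1

lemma rtg_le {p l : Fin F.m} (h : Relation.ReflTransGen (π.linked i j) p l) :
    p ≤ l := by
  induction h with
  | refl => exact le_rfl
  | tail h1 h2 ih => exact le_trans ih (le_of_lt h2.1)

lemma rtg_linear {α : Type*} {r : α → α → Prop}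
    (hdet : ∀ x y z, r x y → r x z → y = z) {b c : α} :
    ∀ {a : α}, Relation.ReflTransGen r a b → Relation.ReflTransGen r a c →
      Relation.ReflTransGen r b c ∨ Relation.ReflTransGen r c b := by
  intro a h1
  induction h1 using Relation.ReflTransGen.head_induction_on with
  | refl => intro h2; exact Or.inl h2
  | head hxy hyb ih =>
    intro hxc
    rcases Relation.ReflTransGen.cases_head hxc with rfl | ⟨y', hxy', hy'c⟩
    · exact Or.inr (hyb.head hxy)
    · have := hdet _ _ _ hxy hxy'
      subst this
      exact ih hy'c

lemma chainBack (hij : i ≠ j) : ∀ (v : Fin F.m), π.enters i v → π.enters j v →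
    ∃ a : Fin F.m, π.meet i j a ∧ Relation.ReflTransGen (π.linked i j) a v := by
  suffices h : ∀ N (v : Fin F.m), v.val < N → π.enters i v → π.enters j v →
      ∃ a : Fin F.m, π.meet i j a ∧ Relation.ReflTransGen (π.linked i j) a v from
    fun v => h (v.val + 1) v (Nat.lt_succ_self _)
  intro N
  induction N with
  | zero => intro v hv; omega
  | succ N ih =>
    intro v hv hei hej
    by_cases hs : π.sameEnter i j v
    · obtain ⟨p, hpv, hlink⟩ := π.sameEnter_linked i j hs
      obtain ⟨a, hma, hrtg⟩ := ih p (by have := Fin.lt_def.mp hpv; omega)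
        (π.enters_of_Iset i hlink.2.2.1) (π.enters_of_Iset j hlink.2.2.2)
      exact ⟨a, hma, hrtg.tail hlink⟩
    · exact ⟨v, ⟨hij, hei, hej, hs⟩, Relation.ReflTransGen.refl⟩

lemma chainCover {a v : Fin F.m} (h : Relation.ReflTransGen (π.linked i j) a v) :
    ∀ u : ℕ, a.val < u → u ≤ v.val → π.covered i j u := by
  induction h with
  | refl => intro u h1 h2; omega
  | tail h1 h2 ih =>
    intro u hu1 hu2
    rename_i b c
    rcases le_or_gt u b.val with h3 | h3
    · exact ih u hu1 h3
    · exact ⟨b, c, h2, h3, hu2⟩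

lemma meet_on_chain {a v u : Fin F.m}
    (hrtg : Relation.ReflTransGen (π.linked i j) a v)
    (hm : π.meet i j u) (h1 : a.val ≤ u.val) (h2 : u.val ≤ v.val) : u = a := by
  by_contra hne
  have hlt : a.val < u.val := by
    have : u.val ≠ a.val := fun h => hne (Fin.ext h)
    omega
  obtain ⟨p, l, hl, hp1, hp2⟩ := π.chainCover i j hrtg u.val hlt h2
  have hIi : π.traj i u.val ∈ F.Iset p l := by
    rw [π.traj_const_fwd i hl.2.2.1 u.val (by omega) hp2]
    exact hl.2.2.1
  rcases eq_or_lt_of_le hp2 with heq | hlt2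
  · have hul : u = l := Fin.ext heq
    subst hul
    exact hm.2.2.2 (π.linked_sameEnter i j hl)
  · exact (mem_Iset_iff.mp hIi).2 u (Fin.lt_def.mpr hp1) (Fin.lt_def.mpr hlt2) hm.2.1

lemma not_covered_of_meet {u : Fin F.m} (hm : π.meet i j u) :
    ¬ π.covered i j u.val := by
  rintro ⟨p, l, hl, hp1, hp2⟩
  have hIi : π.traj i u.val ∈ F.Iset p l := by
    rw [π.traj_const_fwd i hl.2.2.1 u.val (by omega) hp2]
    exact hl.2.2.1
  rcases eq_or_lt_of_le hp2 with heq | hlt2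
  · have hul : u = l := Fin.ext heq
    subst hul
    exact hm.2.2.2 (π.linked_sameEnter i j hl)
  · exact (mem_Iset_iff.mp hIi).2 u (Fin.lt_def.mpr hp1) (Fin.lt_def.mpr hlt2) hm.2.1

lemma not_linked_of_not_covered {v : Fin F.m} (h : ¬ π.covered i j (v.val + 1)) :
    ∀ l', ¬ π.linked i j v l' :=
  fun l' hl => h ⟨v, l', hl, Nat.lt_succ_self _, Fin.lt_def.mp hl.1⟩

lemma step_pres (t : ℕ)
    (h : ¬ (F.memI t (π.traj i t) ∧ F.memI t (π.traj j t))) :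
    (π.traj i (t + 1) < π.traj j (t + 1) ↔ π.traj i t < π.traj j t) := by
  by_cases hi : F.memI t (π.traj i t) <;> by_cases hj : F.memI t (π.traj j t)
  · exact absurd ⟨hi, hj⟩ h
  · obtain ⟨_, hA, hB⟩ := π.step_in i t hi
    obtain ⟨hm, hA0, hB0⟩ := hi
    have hx : ¬ (F.lo ⟨t, hm⟩ ≤ π.traj j t ∧ π.traj j t ≤ F.hi ⟨t, hm⟩) :=
      fun hc => hj ⟨hm, hc⟩
    rw [π.step_out j t hj]
    rw [not_and_or] at hx
    simp only [Fin.lt_def, Fin.le_def, not_le] at *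
    omega
  · obtain ⟨_, hA, hB⟩ := π.step_in j t hj
    obtain ⟨hm, hA0, hB0⟩ := hj
    have hx : ¬ (F.lo ⟨t, hm⟩ ≤ π.traj i t ∧ π.traj i t ≤ F.hi ⟨t, hm⟩) :=
      fun hc => hi ⟨hm, hc⟩
    rw [π.step_out i t hi]
    rw [not_and_or] at hx
    simp only [Fin.lt_def, Fin.le_def, not_le] at *
    omega
  · rw [π.step_out i t hi, π.step_out j t hj]

lemma noCrossEnd (t : ℕ) (hc : ¬ π.covered i j t)
    (hb : ¬ (F.memI t (π.traj i t) ∧ F.memI t (π.traj j t)))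
    (a b : Fin F.m) (hab : π.crossPair i j a b) : b.val ≠ t := by
  intro hbt
  subst hbt
  rcases Relation.ReflTransGen.cases_tail hab.2.1 with heq | ⟨c, hac, hcb⟩
  · subst heq
    exact hb ⟨memI_iff.mpr hab.1.2.1, memI_iff.mpr hab.1.2.2.1⟩
  · exact hc ⟨c, b, hcb, Fin.lt_def.mp hcb.1, le_rfl⟩

end Raw

end StarNetwork
namespace StarNetwork

namespace Raw

variable {n : ℕ} {F : StarNetwork n} (π : F.Raw) (i j : Fin n)

lemma component (hij : i ≠ j) (s : ℕ) (hnc : ¬ π.covered i j (s + 1))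
    (hcase : π.covered i j s ∨ (F.memI s (π.traj i s) ∧ F.memI s (π.traj j s))) :
    ∃ (hs : s < F.m) (a : Fin F.m),
      a.val ≤ s ∧ π.meet i j a ∧ ¬ π.covered i j a.val ∧
      Relation.ReflTransGen (π.linked i j) a ⟨s, hs⟩ ∧
      (∀ l', ¬ π.linked i j ⟨s, hs⟩ l') ∧
      (∀ a' b', π.crossPair i j a' b' → a.val ≤ b'.val → b'.val ≤ s →
        a' = a ∧ b' = ⟨s, hs⟩) := by
  -- Step 1: both paths enter the vertex at position `s`.
  have hstep1 : ∃ (hs : s < F.m),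
      π.enters i ⟨s, hs⟩ ∧ π.enters j ⟨s, hs⟩ := by
    rcases hcase with ⟨p, l, hl, h1, h2⟩ | ⟨hmi, hmj⟩
    · have hls : l.val = s := by
        rcases eq_or_lt_of_le h2 with h | h
        · omega
        · exact absurd ⟨p, l, hl, by omega, by omega⟩ hnc
      have hsm : s < F.m := hls ▸ l.isLt
      have hveq : (⟨s, hsm⟩ : Fin F.m) = l := Fin.ext (by simp [hls])
      refine ⟨hsm, ?_, ?_⟩ <;> rw [hveq]
      · rw [enters_def, π.linked_traj_i i j hl]
        exact (mem_Iset_iff.mp hl.2.2.1).1.2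
      · rw [enters_def, π.linked_traj_j i j hl]
        exact (mem_Iset_iff.mp hl.2.2.2).1.2
    · obtain ⟨hs, -, -⟩ := id hmi
      exact ⟨hs, (memI_iff (k := ⟨s, hs⟩)).mp hmi, (memI_iff (k := ⟨s, hs⟩)).mp hmj⟩
  obtain ⟨hs, hei, hej⟩ := hstep1
  set v : Fin F.m := ⟨s, hs⟩ with hv
  -- Step 2: v is terminal.
  have hterm : ∀ l', ¬ π.linked i j v l' :=
    π.not_linked_of_not_covered i j (by simpa using hnc)
  -- Step 3: trace back to the start of the component.
  obtain ⟨a, hmeet, hrtg⟩ := π.chainBack i j hij v hei hej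
  have hale : a.val ≤ s := Fin.le_def.mp (π.rtg_le i j hrtg)
  refine ⟨hs, a, hale, hmeet, π.not_covered_of_meet i j hmeet, hrtg, hterm, ?_⟩
  -- Step 4: uniqueness.
  intro a' b' hcp h1 h2
  have ha'b' : a'.val ≤ b'.val := Fin.le_def.mp (π.rtg_le i j hcp.2.1)
  have ha'a : a.val ≤ a'.val := by
    by_contra h
    push_neg at h
    exact (π.not_covered_of_meet i j hmeet)
      (π.chainCover i j hcp.2.1 a.val h h1)
  have ha'eq : a' = a :=
    π.meet_on_chain i j hrtg hcp.1 ha'a (le_trans ha'b' h2)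
  subst ha'eq
  refine ⟨rfl, ?_⟩
  have hd : ∀ x y z, π.linked i j x y → π.linked i j x z → y = z :=
    fun x y z => π.linked_succ_unique i j
  rcases rtg_linear hd hcp.2.1 hrtg with h | h
  · rcases Relation.ReflTransGen.cases_head h with rfl | ⟨x, hx, _⟩
    · rfl
    · exact absurd hx (hcp.2.2.1 x)
  · rcases Relation.ReflTransGen.cases_head h with rfl | ⟨x, hx, _⟩
    · rfl
    · exact absurd hx (hterm x)

lemma invariant (hij : i < j) : ∀ t, ¬ π.covered i j t →
    (Even (π.crossCount i j t) ↔ π.traj i t < π.traj j t) := by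
  intro t
  induction t using Nat.strong_induction_on with
  | _ t IH =>
    match t with
    | 0 =>
      intro _
      have h0 : {pl : Fin F.m × Fin F.m |
          π.crossPair i j pl.1 pl.2 ∧ pl.2.val < 0} = ∅ := by
        ext pl; simp
      unfold crossCount
      rw [h0, Set.ncard_empty]
      simp [π.init i, π.init j, hij]
    | s + 1 =>
      intro hnc
      by_cases hcase : π.covered i j s ∨
          (F.memI s (π.traj i s) ∧ F.memI s (π.traj j s))
      · -- component ending at s
        obtain ⟨hs, a, hale, hmeet, hnca, hrtg, hterm, huniq⟩ :=
          π.component i j (ne_of_lt hij) s hnc hcase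
        set v : Fin F.m := ⟨s, hs⟩ with hv
        have IHa := IH a.val (by omega) hnca
        by_cases hcross : π.crossPair i j a v
        · have hset : {pl : Fin F.m × Fin F.m |
              π.crossPair i j pl.1 pl.2 ∧ pl.2.val < s + 1} =
              insert (a, v) {pl : Fin F.m × Fin F.m |
                π.crossPair i j pl.1 pl.2 ∧ pl.2.val < a.val} := by
            ext pl
            simp only [Set.mem_insert_iff, Set.mem_setOf_eq]
            constructor
            · rintro ⟨hc1, hc2⟩
              rcases lt_or_ge pl.2.val a.val with h3 | h3
              · exact Or.inr ⟨hc1, h3⟩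
              · obtain ⟨e1, e2⟩ := huniq pl.1 pl.2 hc1 h3 (by omega)
                exact Or.inl (Prod.ext e1 e2)
            · rintro (rfl | ⟨hc1, hc2⟩)
              · exact ⟨hcross, by simp [hv]⟩
              · exact ⟨hc1, by omega⟩
          have hnotmem : (a, v) ∉ {pl : Fin F.m × Fin F.m |
              π.crossPair i j pl.1 pl.2 ∧ pl.2.val < a.val} := by
            rintro ⟨_, hlt⟩
            simp only [hv] at hlt
            omega
          have hcc : π.crossCount i j (s + 1) = π.crossCount i j a.val + 1 := by
            unfold crossCount
            rw [hset, Set.ncard_insert_of_notMem hnotmem]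
          rw [hcc, Nat.even_add_one]
          have hflip := hcross.2.2.2
          rw [IHa]
          constructor
          · intro h
            by_contra h2
            exact hflip ⟨fun hp => absurd hp h, fun hp => absurd hp h2⟩
          · intro h hp
            exact hflip ⟨fun _ => h, fun _ => hp⟩
        · have hset : {pl : Fin F.m × Fin F.m |
              π.crossPair i j pl.1 pl.2 ∧ pl.2.val < s + 1} =
              {pl : Fin F.m × Fin F.m |
                π.crossPair i j pl.1 pl.2 ∧ pl.2.val < a.val} := by
            ext pl
            simp only [Set.mem_setOf_eq]
            constructor
            · rintro ⟨hc1, hc2⟩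
              rcases lt_or_ge pl.2.val a.val with h3 | h3
              · exact ⟨hc1, h3⟩
              · obtain ⟨e1, e2⟩ := huniq pl.1 pl.2 hc1 h3 (by omega)
                rw [e1, e2] at hc1
                exact absurd hc1 hcross
            · rintro ⟨hc1, hc2⟩
              exact ⟨hc1, by omega⟩
          have hcc : π.crossCount i j (s + 1) = π.crossCount i j a.val := by
            unfold crossCount
            rw [hset]
          have hnoflip : π.traj i a.val < π.traj j a.val ↔
              π.traj i (s + 1) < π.traj j (s + 1) := by
            by_contra h
            exact hcross ⟨hmeet, hrtg, hterm, h⟩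
          rw [hcc]
          exact IHa.trans hnoflip
      · -- trivial step
        rw [not_or] at hcase
        obtain ⟨hncs, hb⟩ := hcase
        have hset : {pl : Fin F.m × Fin F.m |
            π.crossPair i j pl.1 pl.2 ∧ pl.2.val < s + 1} =
            {pl : Fin F.m × Fin F.m |
              π.crossPair i j pl.1 pl.2 ∧ pl.2.val < s} := by
          ext pl
          simp only [Set.mem_setOf_eq]
          constructor
          · rintro ⟨hc1, hc2⟩
            have := π.noCrossEnd i j s hncs hb pl.1 pl.2 hc1
            exact ⟨hc1, by omega⟩
          · rintro ⟨hc1, hc2⟩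
            exact ⟨hc1, by omega⟩
        have hcc : π.crossCount i j (s + 1) = π.crossCount i j s := by
          unfold crossCount
          rw [hset]
        rw [hcc, π.step_pres i j s hb]
        exact IH s (by omega) hncs

end Raw

end StarNetwork

/-- **Lemma 3.3** (Parisi–Skandera–Spahiu–Wang).  For a star network
`F ∈ ⊚net n` and a covering path family `π ∈ Π(F)`, the triple `(π_i, π_j, k)`
is a defect if and only if `i < j` and `π_j ≺_k π_i`. -/
theorem defect_iff_enters_lower {n : ℕ} (F : StarNetwork n) (π : F.Raw)
    (i j : Fin n) (k : Fin F.m) :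
    π.defect i j k ↔ i < j ∧ π.precAt j i k := by
  open StarNetwork Raw in
  constructor
  · intro hd
    obtain ⟨hij, hmeet, hodd⟩ := (π.defect_def i j k).mp hd
    obtain ⟨hne, hei, hej, hse⟩ := (π.meet_def i j k).mp hmeet
    have hncov : ¬ π.covered i j k.val := π.not_covered_of_meet i j hmeet
    have hinv := π.invariant i j hij k.val hncov
    rw [π.crossBefore_eq i j k, ← Nat.not_even_iff_odd] at hodd
    have hnp : ¬ (π.traj i k.val < π.traj j k.val) := fun hp => hodd (hinv.mpr hp)
    have hlt : π.traj j k.val < π.traj i k.val :=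
      lt_of_le_of_ne (not_lt.mp hnp) (π.traj_ne j i (Ne.symm (ne_of_lt hij)) k.val)
    exact ⟨hij, (π.precAt_def j i k).mpr
      ⟨hej, hei, fun hs => hse (π.sameEnter_symm j i hs), hlt⟩⟩
  · rintro ⟨hij, hpre⟩
    obtain ⟨hej, hei, hse, hlt⟩ := (π.precAt_def j i k).mp hpre
    have hmeet : π.meet i j k := (π.meet_def i j k).mpr
      ⟨ne_of_lt hij, hei, hej, fun hs => hse (π.sameEnter_symm i j hs)⟩
    have hncov : ¬ π.covered i j k.val := π.not_covered_of_meet i j hmeet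
    have hinv := π.invariant i j hij k.val hncov
    refine (π.defect_def i j k).mpr ⟨hij, hmeet, ?_⟩
    rw [π.crossBefore_eq i j k, ← Nat.not_even_iff_odd]
    intro hev
    exact absurd (hinv.mp hev) (not_lt.mpr (le_of_lt hlt))
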